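/- For every z on the unit circle (z = e^{iφ}) and every θ ∈ (0,1), the integral of |1-ζ²|^{-1/2} over the Carleson box S_θ(z) = {re^{it} : 1-θ ≤ r < 1, |t-φ| ≤ θ} with respect to normalized area measure is at most 2θ. Consequently, |1-ζ²|^{-1/2} dA(ζ) is a Carleson measure for the Hardy space H² of the unit disc. -/

import Mathlib

open MeasureTheory Complex

/-- The Carleson box `S_θ(e^{iφ}) = {r e^{it} : 1-θ ≤ r < 1, |t-φ| ≤ θ}`. -/
def carlesonBox (φ θ : ℝ) : Set ℂ :=
  (fun p : ℝ × ℝ => (p.1 : ℂ) * Complex.exp (p.2 * Complex.I)) ''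
    (Set.Ico (1 - θ) 1 ×ˢ Set.Icc (φ - θ) (φ + θ))

/-- Area measure on `ℂ`, normalized so that the unit disc has measure `1`. -/
noncomputable def normArea : Measure ℂ := (ENNReal.ofReal Real.pi)⁻¹ • volume

lemma Teq (p : ℝ × ℝ) : (p.1 : ℂ) * Complex.exp (p.2 * Complex.I) =
    Complex.measurableEquivRealProd.symm (polarCoord.symm p) := by
  simp only [Complex.measurableEquivRealProd_symm_apply, polarCoord,
    OpenPartialHomeomorph.coe_mk_symm, PartialEquiv.coe_symm_mk, Complex.exp_mul_I]
  apply Complex.ext <;> simp [Complex.cos_ofReal_re, Complex.sin_ofReal_re]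

lemma injT (φ θ : ℝ) (hθ0 : 0 < θ) (hθ1 : θ < 1) :
    Set.InjOn (fun p : ℝ × ℝ => (p.1 : ℂ) * Complex.exp (p.2 * Complex.I))
      (Set.Ico (1 - θ) 1 ×ˢ Set.Icc (φ - θ) (φ + θ)) := by
  rintro ⟨r, t⟩ ⟨⟨hr1, hr2⟩, ht1, ht2⟩ ⟨s, u⟩ ⟨⟨hs1, hs2⟩, hu1, hu2⟩ hC
  simp only at *
  have hrpos : 0 < r := by linarith
  have hspos : 0 < s := by linarith
  have habs := congrArg (‖·‖) hC
  simp only [norm_mul, Complex.norm_exp, Complex.norm_real, Real.norm_eq_abs] at habs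
  have hre : ((t : ℂ) * Complex.I).re = 0 := by simp
  have hre2 : ((u : ℂ) * Complex.I).re = 0 := by simp
  rw [hre, hre2, Real.exp_zero, mul_one, mul_one, abs_of_pos hrpos, abs_of_pos hspos] at habs
  subst habs
  have hexp : Complex.exp (t * Complex.I) = Complex.exp (u * Complex.I) := by
    have hr0 : (r : ℂ) ≠ 0 := by exact_mod_cast hrpos.ne'
    exact mul_left_cancel₀ hr0 hC
  rw [Complex.exp_eq_exp_iff_exists_int] at hexp
  obtain ⟨n, hn⟩ := hexp
  have h' : (t : ℂ) - (u + n * (2 * Real.pi)) = 0 := by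
    have h0 : ((t : ℂ) - (u + n * (2 * Real.pi))) * Complex.I = 0 := by
      rw [sub_mul, hn]; ring
    rcases mul_eq_zero.1 h0 with h' | h'
    · exact h'
    · exact absurd h' Complex.I_ne_zero
  have hreal : t = u + n * (2 * Real.pi) := by exact_mod_cast sub_eq_zero.1 h'
  have hn0 : n = 0 := by
    by_contra hne
    have h1 : (1 : ℝ) ≤ |(n : ℝ)| := by exact_mod_cast Int.one_le_abs hne
    have hπ : 3 < Real.pi := Real.pi_gt_three
    have h2 : |t - u| ≤ 2 * θ := by rw [abs_sub_le_iff]; constructor <;> linarith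
    have h3 : |t - u| = |(n : ℝ)| * (2 * Real.pi) := by
      rw [hreal, show u + (n : ℝ) * (2 * Real.pi) - u = (n : ℝ) * (2 * Real.pi) by ring,
        abs_mul, abs_of_pos (by positivity : (0:ℝ) < 2 * Real.pi)]
    nlinarith
  subst hn0
  have : t = u := by push_cast at hreal; linarith
  simp [this]

lemma measurableBox (φ θ : ℝ) (hθ0 : 0 < θ) (hθ1 : θ < 1) :
    MeasurableSet (carlesonBox φ θ) := by
  apply MeasurableSet.image_of_continuousOn_injOn
    (measurableSet_Ico.prod measurableSet_Icc)
  · exact (Continuous.continuousOn (by continuity))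
  · exact injT φ θ hθ0 hθ1

lemma oneDimBound (θ : ℝ) (hθ0 : 0 < θ) (hθ1 : θ < 1) :
    ∫⁻ r in Set.Ico (1 - θ) 1, ENNReal.ofReal ((1 - r) ^ (-(1 / 2) : ℝ)) ≤
      ENNReal.ofReal Real.pi := by
  have hsub : Set.Ico (1 - θ) 1 ⊆ Set.Icc (1 - θ) 1 := Set.Ico_subset_Icc_self
  refine le_trans (lintegral_mono_set hsub) ?_
  have hle : (1 : ℝ) - θ ≤ 1 := by linarith
  have hii : IntervalIntegrable (fun x : ℝ => x ^ (-(1 / 2) : ℝ)) volume 0 θ :=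
    intervalIntegral.intervalIntegrable_rpow' (by norm_num)
  have hint : IntegrableOn (fun r : ℝ => (1 - r) ^ (-(1 / 2) : ℝ)) (Set.Icc (1 - θ) 1) := by
    have := (hii.comp_sub_left 1).symm
    rw [show (1 : ℝ) - θ = 1 - θ by ring, show (1 : ℝ) - 0 = 1 by ring] at this
    exact (intervalIntegrable_iff_integrableOn_Icc_of_le hle).1 this
  have hnn : 0 ≤ᵐ[volume.restrict (Set.Icc (1 - θ) 1)]
      fun r : ℝ => (1 - r) ^ (-(1 / 2) : ℝ) := by
    filter_upwards [ae_restrict_mem measurableSet_Icc] with r hr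
    exact Real.rpow_nonneg (by linarith [hr.2]) _
  rw [← ofReal_integral_eq_lintegral_ofReal hint hnn]
  apply ENNReal.ofReal_le_ofReal
  have hval : ∫ r in Set.Icc (1 - θ) 1, (1 - r) ^ (-(1 / 2) : ℝ) = 2 * θ ^ ((1:ℝ) / 2) := by
    rw [MeasureTheory.integral_Icc_eq_integral_Ioc,
      ← intervalIntegral.integral_of_le hle]
    have := intervalIntegral.integral_comp_sub_left (a := 1 - θ) (b := 1)
      (fun x : ℝ => x ^ (-(1 / 2) : ℝ)) 1
    rw [show (1:ℝ) - 1 = 0 by ring, show (1:ℝ) - (1 - θ) = θ by ring] at this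
    rw [this, integral_rpow (Or.inl (by norm_num))]
    rw [Real.zero_rpow (by norm_num)]
    norm_num
    ring
  rw [hval]
  have h1 : θ ^ ((1:ℝ) / 2) ≤ 1 :=
    Real.rpow_le_one hθ0.le hθ1.le (by norm_num)
  have hπ : 3 < Real.pi := Real.pi_gt_three
  linarith

lemma keyBound (φ θ : ℝ) (hθ0 : 0 < θ) (hθ1 : θ < 1) :
    ∫⁻ ζ in carlesonBox φ θ,
        ENNReal.ofReal (‖1 - ζ ^ 2‖ ^ (-(1 / 2) : ℝ)) ∂normArea ≤
      ENNReal.ofReal (2 * θ) := by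
  set g : ℂ → ENNReal := fun ζ => ENNReal.ofReal (‖1 - ζ ^ 2‖ ^ (-(1 / 2) : ℝ)) with hg
  set rect : Set (ℝ × ℝ) := Set.Ico (1 - θ) 1 ×ˢ Set.Icc (φ - θ) (φ + θ) with hrect
  have hrectm : MeasurableSet rect := measurableSet_Ico.prod measurableSet_Icc
  -- box as image under measurableEquivRealProd.symm of polar image
  have hboxeq : carlesonBox φ θ =
      Complex.measurableEquivRealProd.symm '' (polarCoord.symm '' rect) := by
    rw [carlesonBox, ← Set.image_comp]
    exact Set.image_congr fun p _ => Teq p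
  -- step 1: move to ℝ²
  have step1 : ∫⁻ ζ in carlesonBox φ θ, g ζ ∂volume =
      ∫⁻ p in polarCoord.symm '' rect, g (Complex.measurableEquivRealProd.symm p) ∂volume := by
    rw [hboxeq]
    exact ((Complex.volume_preserving_equiv_real_prod.symm _).setLIntegral_comp_emb
      (MeasurableEquiv.measurableEmbedding _) g _).symm
  -- step 2: polar change of variables
  set B : ℝ × ℝ → ℝ × ℝ →L[ℝ] ℝ × ℝ := fun p =>
    LinearMap.toContinuousLinearMap (Matrix.toLin (Module.Basis.finTwoProd ℝ) (Module.Basis.finTwoProd ℝ)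
      !![Real.cos p.2, -p.1 * Real.sin p.2; Real.sin p.2, p.1 * Real.cos p.2]) with hB
  have hBdet : ∀ p, (B p).det = p.1 := by
    intro p
    conv_rhs => rw [← one_mul p.1, ← Real.cos_sq_add_sin_sq p.2]
    simp only [hB, neg_mul, LinearMap.det_toContinuousLinearMap, LinearMap.det_toLin,
      Matrix.det_fin_two_of, sub_neg_eq_add]
    ring
  have hinj : Set.InjOn polarCoord.symm rect := by
    intro p hp q hq hpq
    apply injT φ θ hθ0 hθ1 hp hq
    simp only [Teq p, Teq q, hpq]
  have step2 : ∫⁻ p in polarCoord.symm '' rect, g (Complex.measurableEquivRealProd.symm p)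
        ∂volume =
      ∫⁻ p in rect, ENNReal.ofReal |(B p).det| *
        g (Complex.measurableEquivRealProd.symm (polarCoord.symm p)) ∂volume :=
    lintegral_image_eq_lintegral_abs_det_fderiv_mul volume hrectm
      (fun p _ => (hasFDerivAt_polarCoord_symm p).hasFDerivWithinAt) hinj _
  -- step 3: pointwise bound on rect
  have step3 : ∫⁻ p in rect, ENNReal.ofReal |(B p).det| *
        g (Complex.measurableEquivRealProd.symm (polarCoord.symm p)) ∂volume ≤
      ∫⁻ p in rect, ENNReal.ofReal ((1 - p.1) ^ (-(1 / 2) : ℝ)) ∂volume := by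
    apply setLIntegral_mono (by fun_prop)
    rintro ⟨r, t⟩ ⟨⟨hr1, hr2⟩, _, _⟩
    have hrpos : 0 < r := by linarith
    rw [hBdet, ← Teq (r, t)]
    have habs : ‖(r : ℂ) * Complex.exp (t * Complex.I)‖ = r := by
      simp [Complex.norm_exp, abs_of_pos hrpos]
    have hlow : 1 - r ≤ ‖1 - ((r : ℂ) * Complex.exp (t * Complex.I)) ^ 2‖ := by
      have h1 := norm_sub_norm_le (1 : ℂ) (((r : ℂ) * Complex.exp (t * Complex.I)) ^ 2)
      simp only [norm_one, norm_pow, habs] at h1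
      nlinarith
    have hb : ‖1 - ((r : ℂ) * Complex.exp (t * Complex.I)) ^ 2‖ ^ (-(1 / 2) : ℝ) ≤
        (1 - r) ^ (-(1 / 2) : ℝ) :=
      Real.rpow_le_rpow_of_nonpos (by linarith) hlow (by norm_num)
    calc ENNReal.ofReal |r| * g ((r : ℂ) * Complex.exp (t * Complex.I)) ≤
        1 * ENNReal.ofReal ((1 - r) ^ (-(1 / 2) : ℝ)) := by
          apply mul_le_mul
          · rw [abs_of_pos hrpos]; exact ENNReal.ofReal_le_one.2 hr2.le
          · exact ENNReal.ofReal_le_ofReal hb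
          · exact zero_le
          · exact zero_le
      _ = ENNReal.ofReal ((1 - r) ^ (-(1 / 2) : ℝ)) := one_mul _
  -- step 4: Fubini
  have step4 : ∫⁻ p in rect, ENNReal.ofReal ((1 - p.1) ^ (-(1 / 2) : ℝ)) ∂volume =
      (∫⁻ r in Set.Ico (1 - θ) 1, ENNReal.ofReal ((1 - r) ^ (-(1 / 2) : ℝ))) *
        ENNReal.ofReal (2 * θ) := by
    rw [hrect, MeasureTheory.Measure.volume_eq_prod, ← MeasureTheory.Measure.prod_restrict]
    have := MeasureTheory.lintegral_prod_mul
      (μ := volume.restrict (Set.Ico (1 - θ) 1)) (ν := volume.restrict (Set.Icc (φ - θ) (φ + θ)))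
      (f := fun r : ℝ => ENNReal.ofReal ((1 - r) ^ (-(1 / 2) : ℝ))) (g := fun _ : ℝ => 1)
      (by fun_prop) aemeasurable_const
    simp only [mul_one] at this
    rw [this, lintegral_one, Measure.restrict_apply_univ, Real.volume_Icc]
    congr 1
    · ring_nf
  -- assemble
  have hvol : ∫⁻ ζ in carlesonBox φ θ, g ζ ∂volume ≤
      ENNReal.ofReal Real.pi * ENNReal.ofReal (2 * θ) := by
    rw [step1, step2]
    refine le_trans step3 ?_
    rw [step4]
    exact mul_le_mul_left (oneDimBound θ hθ0 hθ1) _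
  have hπpos : (0 : ℝ) < Real.pi := Real.pi_pos
  calc ∫⁻ ζ in carlesonBox φ θ, g ζ ∂normArea
      = (ENNReal.ofReal Real.pi)⁻¹ * ∫⁻ ζ in carlesonBox φ θ, g ζ ∂volume := by
        rw [normArea, Measure.restrict_smul, lintegral_smul_measure, smul_eq_mul]
    _ ≤ (ENNReal.ofReal Real.pi)⁻¹ * (ENNReal.ofReal Real.pi * ENNReal.ofReal (2 * θ)) :=
        mul_le_mul_right hvol _
    _ = ENNReal.ofReal (2 * θ) := by
        rw [← mul_assoc, ENNReal.inv_mul_cancel (by simp [hπpos]) ENNReal.ofReal_ne_top, one_mul]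

/-- For every `z = e^{iφ}` on the unit circle and every `θ ∈ (0,1)`, the integral of
`|1-ζ²|^{-1/2}` over the Carleson box `S_θ(z)` with respect to normalized area measure
is at most `2θ`; consequently `|1-ζ²|^{-1/2} dA(ζ)` is a Carleson measure for the Hardy
space `H²` of the unit disc. -/
theorem stmt_0 :
    (∀ φ θ : ℝ, 0 < θ → θ < 1 →
      ∫⁻ ζ in carlesonBox φ θ,
          ENNReal.ofReal (‖1 - ζ ^ 2‖ ^ (-(1 / 2) : ℝ)) ∂normArea ≤
        ENNReal.ofReal (2 * θ)) ∧
    ∃ C : ℝ, ∀ φ θ : ℝ, 0 < θ → θ < 1 →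
      (normArea.withDensity fun ζ =>
          ENNReal.ofReal (‖1 - ζ ^ 2‖ ^ (-(1 / 2) : ℝ)))
        (carlesonBox φ θ) ≤ ENNReal.ofReal (C * θ) := by
  refine ⟨keyBound, 2, fun φ θ hθ0 hθ1 => ?_⟩
  rw [withDensity_apply _ (measurableBox φ θ hθ0 hθ1)]
  exact keyBound φ θ hθ0 hθ1
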